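/- For every polynomial P ∈ ℚ[x_0,…,x_N] and all x,a ∈ ℝ, the derivative with respect to a of the evaluated expression satisfies d/da [P(K(x,a))] = (D_{K2}P)(K(x,a)). -/

import Mathlib

/-- Generalized binomial coefficient `C(t, k) = t(t-1)⋯(t-k+1)/k!` of a real number. -/
noncomputable def genBinom (t : ℝ) (k : ℕ) : ℝ :=
  (∏ j ∈ Finset.range k, (t - j)) / (Nat.factorial k)

lemma genBinom_zero (t : ℝ) : genBinom t 0 = 1 := by simp [genBinom]

lemma genBinom_succ (t : ℝ) (k : ℕ) :
    genBinom t (k + 1) = genBinom t k * (t - k) / (k + 1) := by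
  simp only [genBinom, Finset.prod_range_succ, Nat.factorial_succ, Nat.cast_mul,
    Nat.cast_add, Nat.cast_one]
  rw [div_mul_eq_mul_div, div_div]
  ring

lemma key_mul (t : ℝ) (k j : ℕ) :
    (t - k) * genBinom t j
      = ((j : ℝ) + 1) * genBinom t (j + 1) - ((k : ℝ) - j) * genBinom t j := by
  rw [genBinom_succ]
  have hj : ((j : ℝ) + 1) ≠ 0 := by positivity
  field_simp
  ring

lemma hasDerivAt_genBinom (k : ℕ) (t : ℝ) :
    HasDerivAt (fun s => genBinom s k)
      (∑ j ∈ Finset.range k, (-1 : ℝ) ^ (k + 1 + j) / ((k : ℝ) - j) * genBinom t j) t := by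
  induction k with
  | zero =>
    simpa [genBinom_zero] using (hasDerivAt_const t (1 : ℝ))
  | succ k ih =>
    have hg : HasDerivAt (fun s : ℝ => (s - (k : ℝ)) / ((k : ℝ) + 1)) (1 / ((k : ℝ) + 1)) t := by
      simpa using ((hasDerivAt_id t).sub_const (k : ℝ)).div_const ((k : ℝ) + 1)
    have h1 := ih.mul hg
    have h2 : HasDerivAt (fun s => genBinom s (k + 1))
        ((∑ j ∈ Finset.range k, (-1 : ℝ) ^ (k + 1 + j) / ((k : ℝ) - j) * genBinom t j)
            * ((t - k) / ((k : ℝ) + 1))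
          + genBinom t k * (1 / ((k : ℝ) + 1))) t := by
      refine h1.congr_of_eventuallyEq ?_
      filter_upwards with s
      rw [genBinom_succ]
      simp only [Pi.mul_apply]
      ring
    convert h2 using 1
    push_cast
    set g := genBinom t with hgdef
    have F : ℕ → ℝ := fun j => 0
    set Fn : ℕ → ℝ := fun j => (-1 : ℝ) ^ (k + j) * j / ((((k : ℝ) + 1 - j)) * ((k : ℝ) + 1)) * g j with hF
    set Gn : ℕ → ℝ := fun j => (-1 : ℝ) ^ (k + j) / ((k : ℝ) + 1) * g j with hG
    have hT : ∑ j ∈ Finset.range (k + 1), (-1 : ℝ) ^ (k + 1 + 1 + j) / (((k : ℝ) + 1) - j) * g j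
        = ∑ j ∈ Finset.range (k + 1), (Fn j + Gn j) := by
      refine Finset.sum_congr rfl ?_
      intro j hj
      have hjk : j ≤ k := Nat.lt_succ_iff.mp (Finset.mem_range.mp hj)
      have hne : ((k : ℝ) + 1 - j) ≠ 0 := by
        have : (j : ℝ) ≤ k := by exact_mod_cast hjk
        intro h; nlinarith
      have hk1 : ((k : ℝ) + 1) ≠ 0 := by positivity
      have hs : (-1 : ℝ) ^ (k + 1 + 1 + j) = (-1 : ℝ) ^ (k + j) := by
        rw [show k + 1 + 1 + j = (k + j) + 2 by ring, pow_add]; norm_num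
      simp only [hF, hG, hs]
      field_simp
      ring
    have hF0 : Fn 0 = 0 := by simp [hF]
    have hsplit : ∑ j ∈ Finset.range (k + 1), (Fn j + Gn j)
        = ∑ j ∈ Finset.range (k + 1), Fn j + ∑ j ∈ Finset.range (k + 1), Gn j :=
      Finset.sum_add_distrib
    have hFs : ∑ j ∈ Finset.range (k + 1), Fn j = ∑ j ∈ Finset.range k, Fn (j + 1) := by
      rw [Finset.sum_range_succ', hF0, add_zero]
    have hGs : ∑ j ∈ Finset.range (k + 1), Gn j
        = ∑ j ∈ Finset.range k, Gn j + Gn k := Finset.sum_range_succ _ _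
    rw [hT, hsplit, hFs, hGs]
    have hL : (∑ j ∈ Finset.range k, (-1 : ℝ) ^ (k + 1 + j) / ((k : ℝ) - j) * g j)
          * ((t - k) / ((k : ℝ) + 1))
        = ∑ j ∈ Finset.range k, (Fn (j + 1) + Gn j) := by
      rw [Finset.sum_mul]
      refine Finset.sum_congr rfl ?_
      intro j hj
      have hjk : j < k := Finset.mem_range.mp hj
      have hne : ((k : ℝ) - j) ≠ 0 := by
        have : (j : ℝ) < k := by exact_mod_cast hjk
        intro h; nlinarith
      have hk1 : ((k : ℝ) + 1) ≠ 0 := by positivity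
      have hkey := key_mul t k j
      have : (-1 : ℝ) ^ (k + 1 + j) / ((k : ℝ) - j) * g j * ((t - (k : ℝ)) / ((k : ℝ) + 1))
          = (-1 : ℝ) ^ (k + 1 + j) / (((k : ℝ) - j) * ((k : ℝ) + 1))
              * (((j : ℝ) + 1) * g (j + 1) - ((k : ℝ) - j) * g j) := by
        rw [← hkey]; field_simp; ring
      rw [this]
      have hs1 : (-1 : ℝ) ^ (k + (j + 1)) = (-1 : ℝ) ^ (k + 1 + j) := by ring_nf
      simp only [hF, hG, hs1]
      have hs2 : (-1 : ℝ) ^ (k + j) = -(-1 : ℝ) ^ (k + 1 + j) := by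
        rw [show k + 1 + j = (k + j) + 1 by ring, pow_succ]; ring
      rw [hs2]
      push_cast
      have hne2 : ((k : ℝ) + 1 - ((j : ℝ) + 1)) = (k : ℝ) - j := by ring
      rw [hne2]
      field_simp
      ring
    have hGk : g k * (1 / ((k : ℝ) + 1)) = Gn k := by
      have : (-1 : ℝ) ^ (k + k) = 1 := by rw [← two_mul, pow_mul]; norm_num
      simp [hG, this]; ring
    rw [hL, hGk, Finset.sum_add_distrib]
    ring

/-- The binary Kravchuk polynomial `K_n(x,a) = ∑_{i=0}^n (-1)^i C(x,i) C(a-x, n-i)`. -/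
noncomputable def K (n : ℕ) (x a : ℝ) : ℝ :=
  ∑ i ∈ Finset.range (n + 1), (-1 : ℝ) ^ i * genBinom x i * genBinom (a - x) (n - i)

lemma hasDerivAt_K (m : ℕ) (x a : ℝ) :
    HasDerivAt (fun t => K m x t)
      (∑ l ∈ Finset.range m, (-1 : ℝ) ^ (m + 1 + l) / ((m : ℝ) - l) * K l x a) a := by
  have hterm : ∀ i ∈ Finset.range (m + 1), HasDerivAt
      (fun t => (-1 : ℝ) ^ i * genBinom x i * genBinom (t - x) (m - i))
      ((-1 : ℝ) ^ i * genBinom x i *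
        (∑ j ∈ Finset.range (m - i),
          (-1 : ℝ) ^ ((m - i) + 1 + j) / (((m - i : ℕ) : ℝ) - j) * genBinom (a - x) j)) a := by
    intro i _
    have hsub : HasDerivAt (fun t : ℝ => t - x) 1 a := by
      simpa using (hasDerivAt_id a).sub_const x
    have hcomp := (hasDerivAt_genBinom (m - i) (a - x)).comp a hsub
    simpa [mul_comm] using hcomp.const_mul ((-1 : ℝ) ^ i * genBinom x i)
  have hsum := HasDerivAt.fun_sum hterm
  have hfun : (fun t => ∑ i ∈ Finset.range (m + 1),
      (-1 : ℝ) ^ i * genBinom x i * genBinom (t - x) (m - i)) = fun t => K m x t := by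
    funext t; rw [K]
  rw [hfun] at hsum
  refine hsum.congr_deriv ?_
  symm
  -- reindex the double sum
  simp only [K, Finset.mul_sum]
  rw [Finset.sum_sigma', Finset.sum_sigma']
  refine Finset.sum_nbij' (fun p => ⟨p.2, p.1 - p.2⟩) (fun p => ⟨p.1 + p.2, p.1⟩) ?_ ?_ ?_ ?_ ?_
  · rintro ⟨l, i⟩ hp
    simp only [Finset.mem_sigma, Finset.mem_range] at hp ⊢
    obtain ⟨hl, hi⟩ := hp
    constructor
    · omega
    · omega
  · rintro ⟨i, j⟩ hp
    simp only [Finset.mem_sigma, Finset.mem_range] at hp ⊢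
    obtain ⟨hi, hj⟩ := hp
    constructor
    · omega
    · omega
  · rintro ⟨l, i⟩ hp
    simp only [Finset.mem_sigma, Finset.mem_range] at hp
    obtain ⟨hl, hi⟩ := hp
    simp only [Sigma.mk.inj_iff]
    constructor
    · omega
    · exact heq_of_eq rfl
  · rintro ⟨i, j⟩ hp
    simp only [Finset.mem_sigma, Finset.mem_range] at hp
    simp only [Sigma.mk.inj_iff]
    constructor
    · trivial
    · have : i + j - i = j := by omega
      rw [this]
  · rintro ⟨l, i⟩ hp
    simp only [Finset.mem_sigma, Finset.mem_range] at hp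
    obtain ⟨hl, hi⟩ := hp
    have hil : i ≤ l := by omega
    have him : i ≤ m := by omega
    -- goal: c m l * ((-1)^i b_i d_{l-i}) = (-1)^i b_i * (c (m-i) (l-i) d_{l-i})
    simp only
    have he : m - i + 1 + (l - i) + 2 * i = m + 1 + l := by omega
    have hsign : (-1 : ℝ) ^ (m + 1 + l) = (-1 : ℝ) ^ (m - i + 1 + (l - i)) := by
      rw [← he, pow_add, pow_mul]; norm_num
    rw [Nat.cast_sub him, Nat.cast_sub hil, hsign]
    ring

/-- The variable `x_i` of `ℚ[x_0,…,x_N]` (for `i ≤ N`). -/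
noncomputable def Xv (N : ℕ) (i : ℕ) : MvPolynomial (Fin (N + 1)) ℚ :=
  if h : i ≤ N then MvPolynomial.X ⟨i, Nat.lt_succ_of_le h⟩ else 0

/-- The second Kravchuk derivation: `D_{K2}(x_0)=0`,
`D_{K2}(x_m)=∑_{i=0}^{m-1} ((-1)^{m+1+i}/(m-i)) x_i`. -/
noncomputable def DK2 (N : ℕ) :
    Derivation ℚ (MvPolynomial (Fin (N + 1)) ℚ) (MvPolynomial (Fin (N + 1)) ℚ) :=
  MvPolynomial.mkDerivation ℚ fun m : Fin (N + 1) =>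
    ∑ i ∈ Finset.range (m : ℕ),
      MvPolynomial.C ((-1 : ℚ) ^ ((m : ℕ) + 1 + i) / (((m : ℕ) : ℚ) - (i : ℚ))) * Xv N i

lemma hasDerivAt_aeval_K (N : ℕ) (P : MvPolynomial (Fin (N + 1)) ℚ) (x a : ℝ) :
    HasDerivAt (fun t : ℝ => MvPolynomial.aeval (fun i : Fin (N + 1) => K (i : ℕ) x t) P)
      (MvPolynomial.aeval (fun i : Fin (N + 1) => K (i : ℕ) x a) (DK2 N P)) a := by
  induction P using MvPolynomial.induction_on with
  | C q =>
    have h0 : DK2 N (MvPolynomial.C q) = 0 := by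
      rw [show (MvPolynomial.C q : MvPolynomial (Fin (N + 1)) ℚ)
        = algebraMap ℚ _ q from rfl]
      exact Derivation.map_algebraMap _ q
    simp only [h0, map_zero, MvPolynomial.aeval_C]
    exact hasDerivAt_const a _
  | add p q hp hq =>
    simpa [map_add] using hp.fun_add hq
  | mul_X p i hp =>
    have hK := hasDerivAt_K (i : ℕ) x a
    have hmul := hp.mul hK
    have haevalX : ∀ t : ℝ, (MvPolynomial.aeval (fun j : Fin (N + 1) => K (j : ℕ) x t))
        (MvPolynomial.X i) = K (i : ℕ) x t := fun t =>
      MvPolynomial.aeval_X (R := ℚ) (fun j : Fin (N + 1) => K (j : ℕ) x t) i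
    have hDX : (MvPolynomial.aeval (fun j : Fin (N + 1) => K (j : ℕ) x a)) (DK2 N (MvPolynomial.X i))
        = ∑ l ∈ Finset.range (i : ℕ), (-1 : ℝ) ^ ((i : ℕ) + 1 + l) / (((i : ℕ) : ℝ) - l) * K l x a := by
      rw [show DK2 N (MvPolynomial.X i) = ∑ l ∈ Finset.range (i : ℕ),
          MvPolynomial.C ((-1 : ℚ) ^ ((i : ℕ) + 1 + l) / (((i : ℕ) : ℚ) - (l : ℚ))) * Xv N l from
        MvPolynomial.mkDerivation_X _ _ _]
      rw [map_sum]
      refine Finset.sum_congr rfl ?_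
      intro l hl
      have hlN : l ≤ N := by
        have : l < (i : ℕ) := Finset.mem_range.mp hl
        have := i.isLt
        omega
      rw [map_mul, MvPolynomial.aeval_C]
      rw [show Xv N l = MvPolynomial.X ⟨l, Nat.lt_succ_of_le hlN⟩ from dif_pos hlN]
      rw [MvPolynomial.aeval_X]
      push_cast
      rfl
    have hgoalfun : (fun t : ℝ => (MvPolynomial.aeval (fun j : Fin (N + 1) => K (j : ℕ) x t))
        (p * MvPolynomial.X i))
        = fun t : ℝ => (MvPolynomial.aeval (fun j : Fin (N + 1) => K (j : ℕ) x t)) p * K (i : ℕ) x t := by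
      funext t
      rw [map_mul, haevalX]
    rw [hgoalfun]
    have hDmul : (MvPolynomial.aeval (fun j : Fin (N + 1) => K (j : ℕ) x a))
          (DK2 N (p * MvPolynomial.X i))
        = (MvPolynomial.aeval (fun j : Fin (N + 1) => K (j : ℕ) x a)) (DK2 N p) * K (i : ℕ) x a
          + (MvPolynomial.aeval (fun j : Fin (N + 1) => K (j : ℕ) x a)) p
            * (∑ l ∈ Finset.range (i : ℕ),
                (-1 : ℝ) ^ ((i : ℕ) + 1 + l) / (((i : ℕ) : ℝ) - l) * K l x a) := by
      rw [Derivation.leibniz, smul_eq_mul, smul_eq_mul, map_add, map_mul, map_mul,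
        haevalX, hDX]
      ring
    rw [hDmul]
    exact hmul

/-- `d/da [P(K(x,a))] = (D_{K2}P)(K(x,a))`. -/
theorem deriv_aeval_kravchuk_a (N : ℕ) (P : MvPolynomial (Fin (N + 1)) ℚ) (x a : ℝ) :
    deriv (fun t : ℝ => MvPolynomial.aeval (fun i : Fin (N + 1) => K (i : ℕ) x t) P) a
      = MvPolynomial.aeval (fun i : Fin (N + 1) => K (i : ℕ) x a) (DK2 N P) := by
  exact (hasDerivAt_aeval_K N P x a).deriv
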